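/- arXiv:0902.2718 — 6 statements merged into one kernel-verified Lean document; each statement's English description precedes it below -/
import Mathlib

section
/- For every $x > 0$, the function $h(y) = \operatorname{arsinh}(1/\sinh(y))$ satisfies $h^{-1}(x) \le 1/x$; equivalently, for all $x > 0$ we have $h(1/x) \le x$, i.e., $\operatorname{arsinh}(1/\sinh(1/x)) \le x$. -/
open Real

/-- For every `x > 0`, `h(1/x) ≤ x` where `h(y) = arsinh (1 / sinh y)`;
equivalently `h⁻¹(x) ≤ 1/x`. -/
theorem stmt2 : ∀ x : ℝ, 0 < x → arsinh (1 / sinh (1 / x)) ≤ x := by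
  intro x hx
  have h1 : (0:ℝ) < sinh (1 / x) := sinh_pos_iff.2 (by positivity)
  have h2 : 1 / sinh (1 / x) ≤ sinh x := by
    rw [div_le_iff₀ h1]
    calc (1:ℝ) = x * (1 / x) := by field_simp
    _ ≤ sinh x * sinh (1 / x) :=
      mul_le_mul (self_le_sinh_iff.2 hx.le) (self_le_sinh_iff.2 (by positivity)) (by positivity) (sinh_nonneg_iff.2 hx.le)
  calc arsinh (1 / sinh (1 / x)) ≤ arsinh (sinh x) := arsinh_le_arsinh.2 h2
  _ = x := arsinh_sinh x
end

section
/- Let $T$ be a tree (a connected acyclic simple graph) and let $\mathrm{Lab} : V(T) \to \mathcal{P}(\{1,\dots,N\})$ be any labelling. Define the canonical extension $\overline{\mathrm{Lab}}(x) = \bigcup \{\mathrm{Lab}(a) \cap \mathrm{Lab}(b) : x \text{ lies on the path } [ab]\}$. Then $\overline{\mathrm{Lab}}$ satisfies the connectedness property: for all vertices $a, b$ and any vertex $x$ on the path $[ab]$, $\overline{\mathrm{Lab}}(a) \cap \overline{\mathrm{Lab}}(b) \subseteq \overline{\mathrm{Lab}}(x)$. -/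
open SimpleGraph

/-- The canonical extension of a labelling of a tree: `i` labels `x` iff `x`
lies on a path between two vertices both labelled `i`. -/
def canonicalExt {V : Type*} (G : SimpleGraph V) {N : ℕ}
    (Lab : V → Set (Fin N)) (x : V) : Set (Fin N) :=
  {i | ∃ (a b : V) (p : G.Walk a b), p.IsPath ∧ x ∈ p.support ∧
    i ∈ Lab a ∧ i ∈ Lab b}

private lemma split_aux {V : Type*} {G : SimpleGraph V} (hG : G.IsTree)
    {a b c x : V} (p : G.Walk a b) (hp : p.IsPath) (hx : x ∈ p.support)
    (q : G.Walk a c) (r : G.Walk c b) : x ∈ q.support ∨ x ∈ r.support := by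
  classical
  obtain ⟨P, -, hP⟩ := hG.existsUnique_path a b
  have h1 : p = (q.append r).bypass := by
    rw [hP p hp, hP (q.append r).bypass (q.append r).bypass_isPath]
  have : x ∈ (q.append r).support := (q.append r).support_bypass_subset (h1 ▸ hx)
  rwa [SimpleGraph.Walk.mem_support_append_iff] at this

/-- The canonical extension of any labelling of a tree satisfies the
connectedness property (Property A): labels shared by two vertices appear at
every vertex on the path between them. -/
theorem stmt6 {V : Type*} (G : SimpleGraph V) (hG : G.IsTree) {N : ℕ}
    (Lab : V → Set (Fin N)) :
    ∀ (a b x : V) (p : G.Walk a b), p.IsPath → x ∈ p.support →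
      canonicalExt G Lab a ∩ canonicalExt G Lab b ⊆ canonicalExt G Lab x := by
  classical
  intro a b x p hp hx i hi
  obtain ⟨hia, hib⟩ := hi
  obtain ⟨a₁, b₁, p₁, hp₁, ha₁, hLa₁, hLb₁⟩ := hia
  obtain ⟨a₂, b₂, p₂, hp₂, hb₂, hLa₂, hLb₂⟩ := hib
  obtain ⟨w1, hw1⟩ : ∃ w : G.Walk a a₂, w.IsPath :=
    ⟨((hG.isConnected.preconnected a a₂).some).toPath,
      SimpleGraph.Walk.bypass_isPath _⟩
  rcases split_aux hG p hp hx w1 (p₂.takeUntil b hb₂) with h | h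
  · obtain ⟨s, hs⟩ : ∃ w : G.Walk a₁ a₂, w.IsPath :=
      ⟨((hG.isConnected.preconnected a₁ a₂).some).toPath,
        SimpleGraph.Walk.bypass_isPath _⟩
    rcases split_aux hG w1 hw1 h (p₁.takeUntil a ha₁).reverse s with h2 | h2
    · rw [SimpleGraph.Walk.support_reverse, List.mem_reverse] at h2
      exact ⟨a₁, b₁, p₁, hp₁, (p₁.support_takeUntil_subset ha₁) h2, hLa₁, hLb₁⟩
    · exact ⟨a₁, a₂, s, hs, h2, hLa₁, hLa₂⟩
  · exact ⟨a₂, b₂, p₂, hp₂, (p₂.support_takeUntil_subset hb₂) h, hLa₂, hLb₂⟩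
end

section
/- Let $T$ be a tree with labelling $\mathrm{Lab}$ and let $\overline{\mathrm{Lab}}$ be its canonical extension. If a vertex $v$ lies on the path $[ab]$ and $i \in \overline{\mathrm{Lab}}(a) \cap \overline{\mathrm{Lab}}(b)$, then there exist vertices $a', b'$ such that $v$ lies on the path $[a'b']$ and $i \in \mathrm{Lab}(a') \cap \mathrm{Lab}(b')$. -/
open SimpleGraph

private lemma append_isPath' {V : Type*} {G : SimpleGraph V} {u v w : V}
    {p : G.Walk u v} {q : G.Walk v w} (hp : p.IsPath) (hq : q.IsPath)
    (h : ∀ x, x ∈ p.support → x ∈ q.support → x = v) : (p.append q).IsPath := by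
  rw [Walk.isPath_def, Walk.support_append]
  refine List.Nodup.append hp.support_nodup hq.support_nodup.tail ?_
  intro x hx1 hx2
  have hxq : x ∈ q.support := by
    rw [q.support_eq_cons]; exact List.mem_cons_of_mem _ hx2
  have hxv : x = v := h x hx1 hxq
  subst hxv
  have hnd : q.support.Nodup := hq.support_nodup
  rw [q.support_eq_cons] at hnd
  exact (List.nodup_cons.mp hnd).1 hx2

private lemma disj_of_append_isPath {V : Type*} {G : SimpleGraph V} {u v w : V}
    {p : G.Walk u v} {q : G.Walk v w} (h : (p.append q).IsPath)
    {x : V} (hx1 : x ∈ p.support) (hx2 : x ∈ q.support) : x = v := by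
  by_contra hxv
  rw [Walk.isPath_def, Walk.support_append] at h
  have hx2' : x ∈ q.support.tail := by
    rw [q.support_eq_cons, List.mem_cons] at hx2
    exact hx2.resolve_left hxv
  exact (List.disjoint_of_nodup_append h) hx1 hx2'

private lemma path_unique {V : Type*} {G : SimpleGraph V} (hG : G.IsTree) {u v : V}
    {p q : G.Walk u v} (hp : p.IsPath) (hq : q.IsPath) : p = q :=
  ((hG.existsUnique_path u v).unique hp hq)

/-- Key lemma: if `v` is on the path from `a` to `b`, and `a` is on the path `p₁`
from `a₁` to `b₁`, and `v` is not on `p₁`, then there is a path from `a₁` to `b`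
through `v`. -/
private lemma key {V : Type*} {G : SimpleGraph V} (hG : G.IsTree) {a b v a₁ b₁ : V}
    (p : G.Walk a b) (hp : p.IsPath) (hv : v ∈ p.support)
    (p₁ : G.Walk a₁ b₁) (hp₁ : p₁.IsPath) (ha : a ∈ p₁.support)
    (hnv : v ∉ p₁.support) :
    ∃ q : G.Walk a₁ b, q.IsPath ∧ v ∈ q.support := by
  classical
  set r₁ : G.Walk a v := p.takeUntil v hv with hr₁
  set r₂ : G.Walk v b := p.dropUntil v hv with hr₂
  have hpr : (r₁.append r₂).IsPath := by rw [hr₁, hr₂, Walk.take_spec]; exact hp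
  have hr₁p : r₁.IsPath := hp.takeUntil hv
  have hr₂p : r₂.IsPath := hp.dropUntil hv
  set q₁ : G.Walk a₁ a := p₁.takeUntil a ha with hq₁
  have hq₁p : q₁.IsPath := hp₁.takeUntil ha
  have hq₁sub : q₁.support ⊆ p₁.support := p₁.support_takeUntil_subset ha
  -- q₁ and r₂ are disjoint
  have hq1r2 : ∀ x, x ∈ q₁.support → x ∈ r₂.support → False := by
    intro w hw1 hw2
    have hwv : w ≠ v := fun h => hnv (h ▸ hq₁sub hw1)
    -- path from a to w through v
    set P1 : G.Walk a w := r₁.append (r₂.takeUntil w hw2) with hP1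
    have hP1p : P1.IsPath := by
      refine append_isPath' hr₁p (hr₂p.takeUntil hw2) ?_
      intro x hx1 hx2
      exact disj_of_append_isPath hpr hx1 (r₂.support_takeUntil_subset hw2 hx2)
    have hvP1 : v ∈ P1.support := by
      rw [hP1, Walk.mem_support_append_iff]
      exact Or.inl r₁.end_mem_support
    -- path from a to w inside p₁
    have hw1' : w ∈ q₁.reverse.support := by rw [Walk.support_reverse, List.mem_reverse]; exact hw1
    set P2 : G.Walk a w := q₁.reverse.takeUntil w hw1' with hP2
    have hP2p : P2.IsPath := hq₁p.reverse.takeUntil hw1'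
    have : P1 = P2 := path_unique hG hP1p hP2p
    rw [this, hP2] at hvP1
    have : v ∈ q₁.reverse.support := q₁.reverse.support_takeUntil_subset hw1' hvP1
    rw [Walk.support_reverse, List.mem_reverse] at this
    exact hnv (hq₁sub this)
  -- the path a₁ → v
  set W : G.Walk a₁ v := (q₁.append r₁).bypass with hW
  have hWp : W.IsPath := (q₁.append r₁).bypass_isPath
  have hWsub : W.support ⊆ (q₁.append r₁).support := (q₁.append r₁).support_bypass_subset
  refine ⟨W.append r₂, ?_, ?_⟩
  · refine append_isPath' hWp hr₂p ?_
    intro x hx1 hx2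
    have := hWsub hx1
    rw [Walk.mem_support_append_iff] at this
    rcases this with h' | h'
    · exact absurd hx2 (fun h'' => hq1r2 x h' h'')
    · exact disj_of_append_isPath hpr h' hx2
  · rw [Walk.mem_support_append_iff]
    exact Or.inl W.end_mem_support

/-- If `v` lies on the path `[ab]` and `i` belongs to the canonical extension
labels of both `a` and `b`, then there are vertices `a'`, `b'` with `v` on the
path `[a'b']` and `i` an original label of both `a'` and `b'`. -/
theorem stmt7 {V : Type*} (G : SimpleGraph V) (hG : G.IsTree) {N : ℕ}
    (Lab : V → Set (Fin N)) (a b v : V) (p : G.Walk a b)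
    (hp : p.IsPath) (hv : v ∈ p.support) (i : Fin N)
    (hia : i ∈ canonicalExt G Lab a) (hib : i ∈ canonicalExt G Lab b) :
    ∃ (a' b' : V) (q : G.Walk a' b'), q.IsPath ∧ v ∈ q.support ∧
      i ∈ Lab a' ∧ i ∈ Lab b' := by
  obtain ⟨a₁, b₁, p₁, hp₁, ha1, hi1, hi2⟩ := hia
  obtain ⟨a₂, b₂, p₂, hp₂, hb2, hj1, hj2⟩ := hib
  by_cases hv1 : v ∈ p₁.support
  · exact ⟨a₁, b₁, p₁, hp₁, hv1, hi1, hi2⟩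
  obtain ⟨q, hq, hvq⟩ := key hG p hp hv p₁ hp₁ ha1 hv1
  by_cases hv2 : v ∈ p₂.support
  · exact ⟨a₂, b₂, p₂, hp₂, hv2, hj1, hj2⟩
  have hvq' : v ∈ q.reverse.support := by
    rw [Walk.support_reverse, List.mem_reverse]; exact hvq
  obtain ⟨q', hq', hvq''⟩ := key hG q.reverse hq.reverse hvq' p₂ hp₂ hb2 hv2
  exact ⟨a₂, a₁, q', hq', hvq'', hj1, hi1⟩
end

section
/- Let $T$ be a tree with labelling $\mathrm{Lab}$. If $\mathrm{Lab}$ is surjective (every index $i \in \{1,\dots,N\}$ occurs in the label set of some vertex), then its canonical extension $\overline{\mathrm{Lab}}$ is both surjective and satisfies the connectedness property, i.e., is a labelling system. -/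
open SimpleGraph

/-- In an acyclic graph, any path from u to w, where w lies on a path p from u to v,
has support contained in that of p. -/
lemma tree_subpath {V : Type*} [DecidableEq V] {G : SimpleGraph V} (hG : G.IsAcyclic)
    {u v w : V} (p : G.Walk u v) (hp : p.IsPath) (hw : w ∈ p.support)
    (q : G.Walk u w) (hq : q.IsPath) : q.support ⊆ p.support := by
  have h := hG.path_unique ⟨q, hq⟩ ⟨p.takeUntil w hw, hp.takeUntil hw⟩
  have : q.support = (p.takeUntil w hw).support := by
    rw [show q = (⟨q, hq⟩ : G.Path u w).1 from rfl, h]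
  rw [this]
  exact p.support_takeUntil_subset hw

/-- Triangle: the path from u to v is contained in the union of paths u→w and w→v. -/
lemma tree_triangle {V : Type*} [DecidableEq V] {G : SimpleGraph V} (hG : G.IsAcyclic)
    {u v w : V} (p : G.Walk u v) (hp : p.IsPath)
    (q : G.Walk u w) (hq : q.IsPath) (r : G.Walk w v) (hr : r.IsPath)
    {x : V} (hx : x ∈ p.support) : x ∈ q.support ∨ x ∈ r.support := by
  have h := hG.path_unique ⟨p, hp⟩ ⟨(q.append r).bypass, (q.append r).bypass_isPath⟩
  have : p.support = (q.append r).bypass.support := by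
    rw [show p = (⟨p, hp⟩ : G.Path u v).1 from rfl, h]
  rw [this] at hx
  have hx' := (q.append r).support_bypass_subset hx
  rw [Walk.mem_support_append_iff] at hx'
  exact hx'

/-- If a labelling of a tree is surjective, then its canonical extension is a
labelling system: it is surjective and satisfies the connectedness property. -/
theorem stmt8 {V : Type*} (G : SimpleGraph V) (hG : G.IsTree) {N : ℕ}
    (Lab : V → Set (Fin N))
    (hsurj : ∀ i : Fin N, ∃ v : V, i ∈ Lab v) :
    (∀ i : Fin N, ∃ v : V, i ∈ canonicalExt G Lab v) ∧
    (∀ (a b x : V) (p : G.Walk a b), p.IsPath → x ∈ p.support →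
      canonicalExt G Lab a ∩ canonicalExt G Lab b ⊆ canonicalExt G Lab x) := by
  classical
  haveI := Classical.decEq V
  have hA : G.IsAcyclic := hG.IsAcyclic
  have pathBetween : ∀ u v : V, ∃ q : G.Walk u v, q.IsPath := fun u v => by
    obtain ⟨w⟩ := hG.isConnected.preconnected u v
    exact ⟨w.bypass, w.bypass_isPath⟩
  constructor
  · intro i
    obtain ⟨v, hv⟩ := hsurj i
    exact ⟨v, v, v, Walk.nil, Walk.IsPath.nil, by simp, hv, hv⟩
  · rintro a b x p hp hx i ⟨hia, hib⟩
    obtain ⟨a₁, b₁, p₁, hp₁, ha, hia₁, hib₁⟩ := hia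
    obtain ⟨a₂, b₂, p₂, hp₂, hb, hia₂, hib₂⟩ := hib
    obtain ⟨q₁, hq₁⟩ := pathBetween a b₂
    obtain ⟨q₂, hq₂⟩ := pathBetween b₂ b
    rcases tree_triangle hA p hp q₁ hq₁ q₂ hq₂ hx with h1 | h2
    · -- x on path a → b₂
      obtain ⟨r₁, hr₁⟩ := pathBetween a a₁
      obtain ⟨r₂, hr₂⟩ := pathBetween a₁ b₂
      rcases tree_triangle hA q₁ hq₁ r₁ hr₁ r₂ hr₂ h1 with h3 | h4
      · -- x on path a → a₁ ⊆ p₁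
        have hx1 : x ∈ r₁.reverse.support := by
          rw [Walk.support_reverse, List.mem_reverse]; exact h3
        have := tree_subpath hA p₁ hp₁ ha r₁.reverse hr₁.reverse hx1
        exact ⟨a₁, b₁, p₁, hp₁, this, hia₁, hib₁⟩
      · exact ⟨a₁, b₂, r₂, hr₂, h4, hia₁, hib₂⟩
    · -- x on path b₂ → b ⊆ p₂
      have hb' : b ∈ p₂.reverse.support := by
        rw [Walk.support_reverse, List.mem_reverse]; exact hb
      have := tree_subpath hA p₂.reverse hp₂.reverse hb' q₂ hq₂ h2
      rw [Walk.support_reverse, List.mem_reverse] at this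
      exact ⟨a₂, b₂, p₂, hp₂, this, hia₂, hib₂⟩
end

section
/- Let $T$ be a finite simplicial tree with labelling system $\mathrm{Lab}$ and let $T_{\mathrm{spl}}$ be the (nonempty) subtree of useful edges. Then the restriction of $\mathrm{Lab}$ to the vertices of $T_{\mathrm{spl}}$ is surjective: $\bigcup_{v \in T_{\mathrm{spl}}} \mathrm{Lab}(v) = \{1,\dots,N\}$. -/
open SimpleGraph

/-- `x` lies in the component of `u` obtained by removing the open edge `uv`
from the tree `G`: every path from `x` to `v` passes through `u`. -/
def OnSide {V : Type*} (G : SimpleGraph V) (u v x : V) : Prop :=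
  ∀ p : G.Walk x v, p.IsPath → u ∈ p.support

/-- The component of `u` (after removing the edge `uv`) carries all labels. -/
def SideFull {V : Type*} (G : SimpleGraph V) {N : ℕ}
    (Lab : V → Set (Fin N)) (u v : V) : Prop :=
  ∀ i : Fin N, ∃ x : V, OnSide G u v x ∧ i ∈ Lab x

/-- An edge `uv` is useless if one of the two components obtained by removing
it carries all labels. -/
def Useless {V : Type*} (G : SimpleGraph V) {N : ℕ}
    (Lab : V → Set (Fin N)) (u v : V) : Prop :=
  SideFull G Lab u v ∨ SideFull G Lab v u

namespace Stmt13Aux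

variable {V : Type*} {G : SimpleGraph V}

lemma path_eq (hac : G.IsAcyclic) {a b : V} {p q : G.Walk a b}
    (hp : p.IsPath) (hq : q.IsPath) : p = q := by
  have := (SimpleGraph.isAcyclic_iff_path_unique.mp hac) ⟨p, hp⟩ ⟨q, hq⟩
  exact congrArg Subtype.val this

lemma concat_isPath {a b c : V} {p : G.Walk a b} (hp : p.IsPath) (h : G.Adj b c)
    (hc : c ∉ p.support) : (p.concat h).IsPath := by
  rw [← Walk.isPath_reverse_iff, Walk.reverse_concat]
  exact (Walk.cons_isPath_iff _ _).2
    ⟨hp.reverse, by simpa [Walk.support_reverse] using hc⟩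

lemma key {N : ℕ} (hconn : G.Connected) (hac : G.IsAcyclic)
    (Lab : V → Set (Fin N))
    (hA : ∀ (a b x : V) (p : G.Walk a b), p.IsPath → x ∈ p.support →
      Lab a ∩ Lab b ⊆ Lab x)
    (i : Fin N) :
    ∀ n : ℕ, ∀ u v s : V, G.Adj u v → ¬ Useless G Lab u v → OnSide G u v s →
      i ∈ Lab s → ∀ p : G.Walk s u, p.IsPath → p.length ≤ n →
      ∃ a : V, (∃ w : V, G.Adj a w ∧ ¬ Useless G Lab a w) ∧ i ∈ Lab a := by
  classical
  intro n
  induction n with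
  | zero =>
    intro u v s hadj huse _hside hs p _hp hlen
    have hsu : s = u := Walk.eq_of_length_eq_zero (Nat.le_zero.mp hlen)
    exact ⟨u, ⟨v, hadj, huse⟩, hsu ▸ hs⟩
  | succ n ih =>
    intro u v s hadj huse hside hs p hp hlen
    by_cases hiu : i ∈ Lab u
    · exact ⟨u, ⟨v, hadj, huse⟩, hiu⟩
    by_cases hsu : s = u
    · exact ⟨u, ⟨v, hadj, huse⟩, hsu ▸ hs⟩
    obtain ⟨w, h, q, hq⟩ := Walk.exists_eq_cons_of_ne (Ne.symm hsu) p.reverse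
    have hpr : p.reverse.IsPath := hp.reverse
    rw [hq] at hpr
    have hqp : q.IsPath := ((Walk.cons_isPath_iff _ _).1 hpr).1
    have huq : u ∉ q.support := ((Walk.cons_isPath_iff _ _).1 hpr).2
    -- the penultimate vertex `w` differs from `v`
    have hwv : w ≠ v := by
      rintro rfl
      exact huq (by simpa [Walk.support_reverse] using hside q.reverse hqp.reverse)
    have hnf1 : ¬ SideFull G Lab u v := fun hsf => huse (Or.inl hsf)
    obtain ⟨j, hj⟩ : ∃ j : Fin N, ∀ x, OnSide G u v x → j ∉ Lab x := by
      simp only [SideFull, not_forall, not_exists, not_and] at hnf1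
      exact hnf1
    -- the `w`-side of the edge `wu` lies inside the `u`-side of `uv`
    have hC1 : ∀ x, OnSide G w u x → OnSide G u v x := by
      intro x hx r hr
      by_contra hur
      have hradj : G.Adj v u := hadj.symm
      have hr' : (r.concat hradj).IsPath := concat_isPath hr hradj hur
      have hwmem : w ∈ (r.concat hradj).support := hx _ hr'
      have hwr : w ∈ r.support := by
        rcases (by
          simpa [Walk.support_concat, List.concat_eq_append] using hwmem :
          w ∈ r.support ∨ w = u) with h1 | h1
        · exact h1
        · exact ((h.ne) h1.symm).elim
      have hr2 : (r.dropUntil w hwr).IsPath := hr.dropUntil hwr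
      have hur2 : u ∉ (r.dropUntil w hwr).support := fun hmem =>
        hur (Walk.support_dropUntil_subset r hwr hmem)
      have hr3 : ((r.dropUntil w hwr).concat hradj).IsPath :=
        concat_isPath hr2 hradj hur2
      have hedge : (Walk.cons h.symm Walk.nil : G.Walk w u).IsPath := by
        simp [Walk.cons_isPath_iff, h.ne']
      have heq := path_eq hac hr3 hedge
      have hlen3 : (r.dropUntil w hwr).length + 1 = 1 := by
        have := congrArg Walk.length heq
        simpa [Walk.length_concat] using this
      exact hwv (Walk.eq_of_length_eq_zero (p := r.dropUntil w hwr) (by omega))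
    have hnsf1 : ¬ SideFull G Lab w u := by
      intro hsf
      obtain ⟨x, hx1, hx2⟩ := hsf j
      exact hj x (hC1 x hx1) hx2
    -- the `u`-side of the edge `uw` misses label `i`
    have hnsf2 : ¬ SideFull G Lab u w := by
      intro hsf
      obtain ⟨x, hx1, hx2⟩ := hsf i
      obtain ⟨t⟩ := hconn.preconnected x s
      have ht' : t.bypass.IsPath := t.bypass_isPath
      have hut : u ∈ t.bypass.support := by
        by_contra hut
        have huW : u ∉ (t.bypass.append q.reverse).support := by
          rw [Walk.support_append]
          rintro hmem
          rcases List.mem_append.1 hmem with h1 | h1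
          · exact hut h1
          · exact huq (by
              simpa [Walk.support_reverse] using List.mem_of_mem_tail h1)
        have := hx1 (t.bypass.append q.reverse).bypass
          ((t.bypass.append q.reverse).bypass_isPath)
        exact huW (Walk.support_bypass_subset _ this)
      exact hiu (hA x s u t.bypass ht' hut ⟨hx2, hs⟩)
    have huse' : ¬ Useless G Lab w u := fun hc => hc.elim hnsf1 hnsf2
    -- `s` is on the `w`-side of the edge `wu`
    have hsw : OnSide G w u s := by
      intro r hr
      have hrp : r = p := path_eq hac hr hp
      have : w ∈ p.reverse.support := by
        rw [hq]; simp
      rw [hrp]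
      simpa [Walk.support_reverse] using this
    have hlq : q.reverse.length ≤ n := by
      have h1 : p.reverse.length = q.length + 1 := by rw [hq]; simp
      have h2 : p.reverse.length = p.length := Walk.length_reverse p
      simp only [Walk.length_reverse]
      omega
    exact ih w u s h.symm huse' hsw hs q.reverse hqp.reverse hlq

end Stmt13Aux

open Stmt13Aux in
/-- If the subtree of useful edges is nonempty, then the restriction of the
labelling system to the vertices of useful edges is surjective. -/
theorem stmt13 {V : Type*} [Fintype V] (G : SimpleGraph V) (hG : G.IsTree)
    {N : ℕ} (Lab : V → Set (Fin N))
    (hA : ∀ (a b x : V) (p : G.Walk a b), p.IsPath → x ∈ p.support →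
      Lab a ∩ Lab b ⊆ Lab x)
    (hB : ∀ i : Fin N, ∃ v : V, i ∈ Lab v)
    (hne : ∃ u v : V, G.Adj u v ∧ ¬ Useless G Lab u v) :
    ∀ i : Fin N, ∃ v : V,
      (∃ w : V, G.Adj v w ∧ ¬ Useless G Lab v w) ∧ i ∈ Lab v := by
  classical
  intro i
  obtain ⟨u, v, hadj, huse⟩ := hne
  obtain ⟨s, hs⟩ := hB i
  have hconn : G.Connected := hG.1
  have hac : G.IsAcyclic := hG.2
  obtain ⟨t0⟩ := hconn.preconnected s v
  have ht : t0.bypass.IsPath := t0.bypass_isPath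
  by_cases hut : u ∈ t0.bypass.support
  · -- `s` is on the `u`-side
    have hside : OnSide G u v s := by
      intro r hr
      rw [path_eq hac hr ht]
      exact hut
    obtain ⟨t1⟩ := hconn.preconnected s u
    exact key hconn hac Lab hA i t1.bypass.length u v s hadj huse hside hs
      t1.bypass t1.bypass_isPath le_rfl
  · -- `s` is on the `v`-side
    have ht' : (t0.bypass.concat hadj.symm).IsPath :=
      concat_isPath ht hadj.symm hut
    have hside : OnSide G v u s := by
      intro r hr
      rw [path_eq hac hr ht']
      simp [Walk.support_concat, List.concat_eq_append, t0.bypass.end_mem_support]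
    have huse' : ¬ Useless G Lab v u := fun hc => huse hc.symm
    exact key hconn hac Lab hA i t0.bypass.length v u s hadj.symm huse' hside hs
      t0.bypass t0.bypass_isPath le_rfl
end

section
/- Let $X$ be a finite subset of a $\delta$-hyperbolic geodesic space with $|X| \le 2^c + 2$, and let $(T, p)$ be a Gromov approximating tree for $X$, so that $p$ does not increase distances and $d(x_1,x_2) - 2c\delta \le d_T(p(x_1), p(x_2))$ for all $x_1, x_2 \in X$. For a triangle $\Delta = [x_1 x_2 x_3]$ with $x_i \in X$, the restriction of the natural extension $p_\Delta$ to a side $[x_i x_j]$ of $\Delta$ (defined as the dilation onto the corresponding segment of the tripod $T_\Delta = [p(x_1)p(x_2)p(x_3)] \subseteq T$ matching internal points to the branch point) is a $(1, 4c\delta)$-quasi-isometric embedding: for all $y, z \in [x_i x_j]$, $d(y,z) - 4c\delta \le d_T(p_\Delta(y), p_\Delta(z)) \le d(y,z) + 4c\delta$. -/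
open Set

private lemma stmt18_key (a b e x : ℝ) (ha : 0 < a) (hx : 0 ≤ x) (hxa : x ≤ a)
    (hb1 : b ≤ a + e) (hb2 : a - e ≤ b) : |(b / a) * x - x| ≤ e := by
  have h : (b / a) * x - x = ((b - a) * x) / a := by field_simp
  rw [h, abs_le]
  constructor
  · rw [le_div_iff₀ ha]
    nlinarith [mul_le_mul_of_nonneg_right hb2 hx]
  · rw [div_le_iff₀ ha]
    nlinarith [mul_le_mul_of_nonneg_right hb1 hx]

/-- The restriction of the comparison map `p_Δ` to a side of a triangle is a
`(1, 4cδ)`-quasi-isometric embedding.  The side `[x₁x₂]` is parametrized by an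
arclength geodesic `γ : [0,L] → X`; the tripod `[p(x₁)p(x₂)p(x₃)]` in the
approximating tree has side `[p(x₁)p(x₂)]` of length `t₁₂`, branch point at
distance `β` from `p(x₁)`, and the internal point of the triangle side is at
distance `α` from `x₁`.  The map `p_Δ` on the side is the piecewise dilation
`f` matching the internal point to the branch point; the distance in the tree
between images is `|f s - f t|`. -/
theorem stmt18 {X : Type*} [MetricSpace X] (c δ : ℝ) (hc : 0 ≤ c) (hδ : 0 ≤ δ)
    (x₁ x₂ x₃ : X) (L : ℝ) (hL : L = dist x₁ x₂)
    (γ : ℝ → X) (hγ0 : γ 0 = x₁) (hγL : γ L = x₂)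
    (hγ : ∀ s ∈ Icc (0:ℝ) L, ∀ t ∈ Icc (0:ℝ) L, dist (γ s) (γ t) = |s - t|)
    -- tree distances between the images `p(x₁), p(x₂), p(x₃)`
    (t₁₂ t₁₃ t₂₃ : ℝ)
    (ht₁₂ : 0 ≤ t₁₂) (ht₁₃ : 0 ≤ t₁₃) (ht₂₃ : 0 ≤ t₂₃)
    (htri₁ : t₁₂ ≤ t₁₃ + t₂₃) (htri₂ : t₁₃ ≤ t₁₂ + t₂₃)
    (htri₃ : t₂₃ ≤ t₁₂ + t₁₃)
    -- the Gromov approximating tree estimates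
    (h₁₂ : dist x₁ x₂ - 2 * c * δ ≤ t₁₂ ∧ t₁₂ ≤ dist x₁ x₂)
    (h₁₃ : dist x₁ x₃ - 2 * c * δ ≤ t₁₃ ∧ t₁₃ ≤ dist x₁ x₃)
    (h₂₃ : dist x₂ x₃ - 2 * c * δ ≤ t₂₃ ∧ t₂₃ ≤ dist x₂ x₃)
    (α β : ℝ)
    (hα : α = (dist x₁ x₂ + dist x₁ x₃ - dist x₂ x₃) / 2)
    (hβ : β = (t₁₂ + t₁₃ - t₂₃) / 2)
    (hα0 : 0 < α) (hαL : α < L)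
    (f : ℝ → ℝ)
    (hf : ∀ t : ℝ, f t =
      if t ≤ α then (β / α) * t
      else t₁₂ - ((t₁₂ - β) / (L - α)) * (L - t)) :
    ∀ s ∈ Icc (0:ℝ) L, ∀ t ∈ Icc (0:ℝ) L,
      dist (γ s) (γ t) - 4 * c * δ ≤ |f s - f t| ∧
      |f s - f t| ≤ dist (γ s) (γ t) + 4 * c * δ := by
  -- basic facts
  have hcδ : 0 ≤ c * δ := mul_nonneg hc hδ
  have hLα : 0 < L - α := by linarith
  have hβ1 : β ≤ α + 2 * c * δ := by
    rw [hβ, hα]; linarith [h₁₂.2, h₁₃.2, h₂₃.1, h₂₃.2]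
  have hβ2 : α - 2 * c * δ ≤ β := by
    rw [hβ, hα]; linarith [h₁₂.1, h₁₃.1, h₂₃.2]
  have hb1 : t₁₂ - β ≤ (L - α) + 2 * c * δ := by
    rw [hβ, hα, hL]; linarith [h₁₂.2, h₂₃.2, h₁₃.1, h₁₃.2]
  have hb2 : (L - α) - 2 * c * δ ≤ t₁₂ - β := by
    rw [hβ, hα, hL]; linarith [h₁₂.1, h₂₃.1, h₁₃.2]
  -- key claim
  have key : ∀ s ∈ Icc (0:ℝ) L, ∀ t ∈ Icc (0:ℝ) L, s ≤ t →
      |(f t - f s) - (t - s)| ≤ 4 * c * δ := by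
    intro s hs t ht hst
    obtain ⟨hs0, hsL⟩ := hs
    obtain ⟨ht0, htL⟩ := ht
    rcases le_or_gt t α with h1 | h1
    · have hsα : s ≤ α := le_trans hst h1
      rw [hf s, hf t, if_pos hsα, if_pos h1]
      have : β / α * t - β / α * s - (t - s) = (β / α) * (t - s) - (t - s) := by ring
      rw [this]
      have := stmt18_key α β (2 * c * δ) (t - s) hα0 (by linarith) (by linarith)
        (by linarith) (by linarith)
      linarith
    · rcases le_or_gt s α with h2 | h2
      · rw [hf s, hf t, if_pos h2, if_neg (not_le.mpr h1)]
        have e1 : |(β / α) * (α - s) - (α - s)| ≤ 2 * c * δ :=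
          stmt18_key α β (2 * c * δ) (α - s) hα0 (by linarith) (by linarith)
            (by linarith) (by linarith)
        have e2 : |((t₁₂ - β) / (L - α)) * (t - α) - (t - α)| ≤ 2 * c * δ :=
          stmt18_key (L - α) (t₁₂ - β) (2 * c * δ) (t - α) hLα (by linarith)
            (by linarith) hb1 hb2
        have hid : (t₁₂ - (t₁₂ - β) / (L - α) * (L - t)) - β / α * s - (t - s)
            = ((β / α) * (α - s) - (α - s)) + (((t₁₂ - β) / (L - α)) * (t - α) - (t - α)) := by
          field_simp
          ring
        rw [hid]
        calc |((β / α) * (α - s) - (α - s)) + (((t₁₂ - β) / (L - α)) * (t - α) - (t - α))|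
            ≤ |(β / α) * (α - s) - (α - s)| + |((t₁₂ - β) / (L - α)) * (t - α) - (t - α)| :=
              abs_add_le _ _
          _ ≤ 4 * c * δ := by linarith
      · rw [hf s, hf t, if_neg (not_le.mpr (lt_of_lt_of_le h2 hst)),
          if_neg (not_le.mpr h2)]
        have hid : (t₁₂ - (t₁₂ - β) / (L - α) * (L - t))
            - (t₁₂ - (t₁₂ - β) / (L - α) * (L - s)) - (t - s)
            = ((t₁₂ - β) / (L - α)) * (t - s) - (t - s) := by ring
        rw [hid]
        have := stmt18_key (L - α) (t₁₂ - β) (2 * c * δ) (t - s) hLα (by linarith)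
          (by linarith) hb1 hb2
        linarith
  intro s hs t ht
  rw [hγ s hs t ht]
  rcases le_total s t with hst | hst
  · have hk := key s hs t ht hst
    have habs : |s - t| = t - s := by rw [abs_sub_comm]; exact abs_of_nonneg (by linarith)
    rw [habs, abs_sub_comm (f s) (f t)]
    constructor
    · have h1 := abs_sub_abs_le_abs_sub (t - s) (f t - f s)
      have h2 : |t - s - (f t - f s)| = |f t - f s - (t - s)| := abs_sub_comm _ _
      rw [abs_of_nonneg (by linarith : (0:ℝ) ≤ t - s), h2] at h1
      linarith
    · calc |f t - f s| ≤ |(f t - f s) - (t - s)| + |t - s| := by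
            have := abs_add_le ((f t - f s) - (t - s)) (t - s); simp at this ⊢; linarith [this]
        _ ≤ (t - s) + 4 * c * δ := by
            rw [abs_of_nonneg (by linarith : (0:ℝ) ≤ t - s)]; linarith
  · have hk := key t ht s hs hst
    have habs : |s - t| = s - t := abs_of_nonneg (by linarith)
    rw [habs]
    constructor
    · have h1 := abs_sub_abs_le_abs_sub (s - t) (f s - f t)
      have h2 : |s - t - (f s - f t)| = |f s - f t - (s - t)| := abs_sub_comm _ _
      rw [abs_of_nonneg (by linarith : (0:ℝ) ≤ s - t), h2] at h1
      linarith
    · calc |f s - f t| ≤ |(f s - f t) - (s - t)| + |s - t| := by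
            have := abs_add_le ((f s - f t) - (s - t)) (s - t); simp at this ⊢; linarith [this]
        _ ≤ (s - t) + 4 * c * δ := by
            rw [abs_of_nonneg (by linarith : (0:ℝ) ≤ s - t)]; linarith
end
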